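/- Let k, l, m, n be nonnegative integers with k < m < n < l, and let g = gcd(m - k, l - n). If (k, m) ≠ (0, 1), then (ml - nk)(ml - nk + k - m + n - l) + g^2(n - m)(k - l) > 0. -/

import Mathlib

/-- Positivity of F for a facet above the diagonal that is not a `B₁`-facet. -/
theorem stmt3 (k l m n g : ℤ) (hk : 0 ≤ k)
    (hkm : k < m) (hmn : m < n) (hnl : n < l)
    (hg : g = (Int.gcd (m - k) (l - n) : ℤ))
    (hB : ¬(k = 0 ∧ m = 1)) :
    0 < (m * l - n * k) * (m * l - n * k + k - m + n - l)
          + g ^ 2 * (n - m) * (k - l) := by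
  have hmk : (0:ℤ) < m - k := by linarith
  have hdvd : g ∣ (m - k) := by
    rw [hg]; exact Int.gcd_dvd_left _ _
  have hgle : g ≤ m - k := Int.le_of_dvd hmk hdvd
  have hg1 : (1:ℤ) ≤ g := by
    rw [hg]
    have : Int.gcd (m - k) (l - n) ≠ 0 := by
      simp [Int.gcd_eq_zero_iff]
      intro h; omega
    omega
  have hsq : g ^ 2 ≤ (m - k) ^ 2 := by nlinarith
  -- key: compare with (m-k)^2 case and use the algebraic identity
  have hcase : 1 ≤ k ∨ (k = 0 ∧ 2 ≤ m) := by
    by_cases h : k = 0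
    · right
      refine ⟨h, ?_⟩
      rcases eq_or_lt_of_le (by omega : (1:ℤ) ≤ m) with h2 | h2
      · exact absurd ⟨h, h2.symm⟩ hB
      · omega
    · left; omega
  have hlmnk : l * m * (m - 1) - n * k ^ 2 ≥ 0 := by
    nlinarith [mul_nonneg (by linarith : (0:ℤ) ≤ n) (mul_nonneg (by linarith : (0:ℤ) ≤ m-1-k) (by linarith : (0:ℤ) ≤ m-1+k)),
      mul_nonneg (by linarith : (0:ℤ) ≤ n) (by linarith : (0:ℤ) ≤ m-1),
      mul_nonneg (by linarith : (0:ℤ) ≤ l-n) (mul_nonneg (by linarith : (0:ℤ) ≤ m) (by linarith : (0:ℤ) ≤ m-1))]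
  rcases hcase with h | h
  · nlinarith [mul_pos (mul_pos (by linarith : (0:ℤ) < k) (by linarith : (0:ℤ) < n)) hmk,
      mul_nonneg (mul_nonneg (mul_nonneg (by linarith : (0:ℤ) ≤ l) (by linarith : (0:ℤ) ≤ m)) (le_of_lt hmk)) (by linarith : (0:ℤ) ≤ m-k-1),
      mul_nonneg (mul_nonneg hk (by linarith : (0:ℤ) ≤ n-m)) (sq_nonneg (m-k)),
      mul_nonneg (by linarith : (0:ℤ) ≤ l-n) hlmnk,
      mul_nonneg (mul_nonneg hk (by linarith : (0:ℤ) ≤ n)) (by linarith : (0:ℤ) ≤ l-n),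
      mul_nonneg (mul_nonneg (by linarith : (0:ℤ) ≤ (m-k)^2 - g^2) (by linarith : (0:ℤ) ≤ n-m)) (by linarith : (0:ℤ) ≤ l-k)]
  · obtain ⟨hk0, h⟩ := h
    subst hk0
    nlinarith [mul_pos (mul_pos (mul_pos (by linarith : (0:ℤ) < l) (by linarith : (0:ℤ) < m)) (by linarith : (0:ℤ) < m)) (by linarith : (0:ℤ) < m-1),
      mul_nonneg (mul_nonneg (by linarith : (0:ℤ) ≤ m^2 - g^2) (by linarith : (0:ℤ) ≤ n-m)) (by linarith : (0:ℤ) ≤ l),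
      mul_nonneg (by linarith : (0:ℤ) ≤ l-n) (by nlinarith : (0:ℤ) ≤ l*m*(m-1))]
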